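/- arXiv:1711.06345 — 3 statements merged into one kernel-verified Lean document; each statement's English description precedes it below -/
import Mathlib

section
/- Let a, d ∈ ℚ with a ∉ {0, −1} and suppose (a+1)d² + (1−a)d − 1 = 0. Then d ≠ 0, (a+1)d² ≠ 0, the value e := ((a+1)d² − a·d − 1)/((a+1)d²) satisfies e ≠ 0, e ≠ d, (a+1)e² ≠ 0, and ((a+1)e² − a·e − 1)/((a+1)e²) = d. In other words, d is a point of exact period 2 for the map φ_a. -/
/-- For `a ∉ {0, -1}` and `d` a root of the second dynatomic factor
`(a+1)d² + (1-a)d - 1`, the point `d` has exact period 2 under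
`φ_a(z) = ((a+1)z² - a z - 1)/((a+1)z²)`. -/
theorem stmt_0 (a d e : ℚ) (ha0 : a ≠ 0) (ha1 : a ≠ -1)
    (hd : (a + 1) * d ^ 2 + (1 - a) * d - 1 = 0)
    (he : e = ((a + 1) * d ^ 2 - a * d - 1) / ((a + 1) * d ^ 2)) :
    d ≠ 0 ∧ (a + 1) * d ^ 2 ≠ 0 ∧ e ≠ 0 ∧ e ≠ d ∧ (a + 1) * e ^ 2 ≠ 0 ∧
      ((a + 1) * e ^ 2 - a * e - 1) / ((a + 1) * e ^ 2) = d := by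
  have ha1' : a + 1 ≠ 0 := fun h => ha1 (by linarith)
  have hd0 : d ≠ 0 := by
    rintro rfl
    simp at hd
  have hden : (a + 1) * d ^ 2 ≠ 0 := by
    exact mul_ne_zero ha1' (pow_ne_zero 2 hd0)
  have hE : e = -1 / ((a + 1) * d) := by
    rw [he]
    rw [div_eq_div_iff hden (mul_ne_zero ha1' hd0)]
    linear_combination ((a+1)*d) * hd
  have had : (a + 1) * d ≠ 0 := mul_ne_zero ha1' hd0
  have he0 : e ≠ 0 := by
    rw [hE]
    exact div_ne_zero (by norm_num) had
  have hed : e ≠ d := by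
    rw [hE]
    intro h
    rw [div_eq_iff had] at h
    have h2 : (a + 1) * d ^ 2 = -1 := by linear_combination -h
    have h3 : (1 - a) * d = 2 := by linarith
    have h4 : (1 - a) ^ 2 * d ^ 2 = 4 := by linear_combination ((1-a)*d + 2)*h3
    have h5 : 4 * (a + 1) = -(1 - a) ^ 2 := by
      linear_combination (1-a)^2 * h2 - (a+1) * h4
    nlinarith [h5, sq_nonneg (a + 1)]
  have hee : (a + 1) * e ^ 2 ≠ 0 := mul_ne_zero ha1' (pow_ne_zero 2 he0)
  refine ⟨hd0, hden, he0, hed, hee, ?_⟩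
  rw [div_eq_iff hee, hE]
  field_simp
  linear_combination (-1 : ℚ) * hd
end

section
/- The only pairs (c, z) ∈ ℚ × ℚ satisfying c²z² − 3c²z + c² + cz² + cz − c − z² + z = 0 are (c, z) ∈ {(0, 0), (0, 1), (1, 0), (1, 1)}. -/
lemma odd_sq_mod8 {n : ℤ} (h : n % 2 = 1) : n ^ 2 % 8 = 1 := by
  obtain ⟨k, hk⟩ : ∃ k, n = 2 * k + 1 := ⟨n / 2, by omega⟩
  obtain ⟨j, hj⟩ := Int.even_mul_succ_self k
  have h2 : n ^ 2 = 4 * (k * (k + 1)) + 1 := by rw [hk]; ring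
  omega

lemma sq_mod2 (n : ℤ) : n ^ 2 % 2 = n % 2 := by
  obtain ⟨j, hj⟩ := Int.even_mul_succ_self n
  have h2 : n ^ 2 = n * (n + 1) - n := by ring
  omega

lemma even_sq_mod4 {n : ℤ} (h : n % 2 = 0) : n ^ 2 % 4 = 0 := by
  obtain ⟨k, hk⟩ : ∃ k, n = 2 * k := ⟨n / 2, by omega⟩
  have : n ^ 2 = 4 * k ^ 2 := by rw [hk]; ring
  omega

lemma odd_mul_odd {a b : ℤ} (ha : a % 2 = 1) (hb : b % 2 = 1) : (a * b) % 2 = 1 := by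
  obtain ⟨k, hk⟩ : ∃ k, a = 2 * k + 1 := ⟨a / 2, by omega⟩
  obtain ⟨l, hl⟩ : ∃ l, b = 2 * l + 1 := ⟨b / 2, by omega⟩
  have : a * b = 2 * (2 * k * l + k + l) + 1 := by rw [hk, hl]; ring
  omega

lemma even_mul {a b : ℤ} (ha : a % 2 = 0) : (a * b) % 2 = 0 := by
  obtain ⟨k, hk⟩ : ∃ k, a = 2 * k := ⟨a / 2, by omega⟩
  have : a * b = 2 * (k * b) := by rw [hk]; ring
  omega

lemma odd_of_mul_odd {a b : ℤ} (h : (a * b) % 2 = 1) : a % 2 = 1 ∧ b % 2 = 1 := by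
  rcases Int.emod_two_eq a with h1 | h1
  · have := even_mul (b := b) h1; omega
  · rcases Int.emod_two_eq b with h2 | h2
    · have := even_mul (b := a) h2; rw [mul_comm] at this; omega
    · exact ⟨h1, h2⟩

lemma foursplit {a b c d : ℤ} (ha : 0 < a) (hc : 0 < c) (hd : 0 < d)
    (h : a * b = c * d) : ∃ P Q R S : ℤ, 0 < P ∧ 0 < Q ∧ 0 < R ∧ 0 < S ∧
      c = P * Q ∧ d = R * S ∧ a = P * R ∧ b = Q * S := by
  have hb : 0 < b := by nlinarith
  have hdvd : a ∣ c * d := ⟨b, h.symm⟩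
  obtain ⟨p, r, hp, hr, hpr⟩ := exists_dvd_and_dvd_of_dvd_mul hdvd
  have hp0 : p ≠ 0 := by rintro rfl; simp at hpr; omega
  obtain ⟨P, R, hPp, hRr, hPR, hP⟩ : ∃ P R : ℤ, P ∣ c ∧ R ∣ d ∧ a = P * R ∧ 0 < P := by
    rcases lt_or_gt_of_ne hp0 with hneg | hpos
    · exact ⟨-p, -r, (neg_dvd).mpr hp, (neg_dvd).mpr hr, by rw [hpr]; ring, by omega⟩
    · exact ⟨p, r, hp, hr, hpr, hpos⟩
  have hR : 0 < R := by rcases hPR with rfl; nlinarith [mul_pos hc hd]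
  obtain ⟨Q, hQ⟩ := hPp
  obtain ⟨S, hS⟩ := hRr
  refine ⟨P, Q, R, S, hP, by nlinarith, hR, by nlinarith, hQ, hS, hPR, ?_⟩
  have : a * b = a * (Q * S) := by rw [h, hQ, hS, hPR]; ring
  exact mul_left_cancel₀ (by positivity) this

lemma ksplit {A D u v : ℤ} (hA : A ≠ 0) (hcop : IsCoprime A D)
    (h : A ^ 2 * u = D ^ 2 * v) : ∃ k, v = k * A ^ 2 ∧ u = k * D ^ 2 := by
  have h1 : A ^ 2 ∣ D ^ 2 * v := ⟨u, h.symm⟩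
  have h2 : A ^ 2 ∣ v := (IsCoprime.pow hcop).dvd_of_dvd_mul_left h1
  obtain ⟨k, hk⟩ := h2
  refine ⟨k, by rw [hk]; ring, ?_⟩
  have : A ^ 2 * u = A ^ 2 * (k * D ^ 2) := by rw [h, hk]; ring
  exact mul_left_cancel₀ (pow_ne_zero 2 hA) this

lemma dvd17 {k s t : ℤ} (hco : IsCoprime s t) (h1 : k ∣ 17 * s ^ 2) (h2 : k ∣ 17 * t ^ 2) :
    k ∣ 17 := by
  obtain ⟨α, β, hαβ⟩ := hco.pow (n := 2) (m := 2)
  have : (17:ℤ) = α * (17 * s ^ 2) + β * (17 * t ^ 2) := by linear_combination 17 * hαβ.symm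
  rw [this]
  exact dvd_add (Dvd.dvd.mul_left h1 α) (Dvd.dvd.mul_left h2 β)

lemma k_one_or_17 {k : ℤ} (hk : 0 < k) (h : k ∣ 17) : k = 1 ∨ k = 17 := by
  have h1 : k.natAbs ∣ (17:ℤ).natAbs := Int.natAbs_dvd_natAbs.mpr h
  have h2 : k.natAbs ∣ 17 := h1
  have h3 : k.natAbs = 1 ∨ k.natAbs = 17 :=
    (Nat.Prime.eq_one_or_self_of_dvd (by norm_num : Nat.Prime 17)) _ h2
  omega

lemma coprime_of_sq {a b : ℤ} (h : IsCoprime (a ^ 2) (b ^ 2)) : IsCoprime a b :=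
  (h.of_isCoprime_of_dvd_left (dvd_pow_self a two_ne_zero)).of_isCoprime_of_dvd_right
    (dvd_pow_self b two_ne_zero)


lemma self_le_sq {n : ℤ} (h : 0 ≤ n) : n ≤ n ^ 2 := by nlinarith

lemma lt_of_sq_lt_sq {a b : ℤ} (ha : 0 ≤ a) (hb : 0 ≤ b) (h : a ^ 2 < b ^ 2) : a < b := by
  nlinarith

lemma pos_of_mul_sq {k S : ℤ} (hS : S ≠ 0) (h : 0 < k * S ^ 2) : 0 < k := by
  rcases le_or_gt k 0 with hk | hk
  · exfalso
    have h2 : 0 ≤ S ^ 2 := sq_nonneg S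
    nlinarith
  · exact hk

lemma odd_coprime_two {d : ℤ} (h : d % 2 = 1) : IsCoprime d (2 : ℤ) :=
  ⟨1, -(d / 2), by omega⟩

lemma odd_coprime_four {d : ℤ} (h : d % 2 = 1) : IsCoprime d (4 : ℤ) := by
  have h4 : (4:ℤ) = 2 * 2 := by norm_num
  rw [h4]; exact (odd_coprime_two h).mul_right (odd_coprime_two h)

lemma coprime_pm {m n : ℤ} (hmo : m % 2 = 1) (hco : IsCoprime m n) :
    IsCoprime (m - 2*n) (m + 2*n) := by
  obtain ⟨α, β, h1⟩ := hco
  have hodd : (m - 2*n) % 2 = 1 := by omega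
  have h16 : IsCoprime (m - 2*n) (4:ℤ) := odd_coprime_four hodd
  have h5 := h16.add_mul_left_right (-(2*α - β))
  have heq : (4:ℤ) + (m - 2*n) * (-(2*α - β)) = (2*α + β) * (m + 2*n) := by
    linear_combination (-4) * h1
  rw [heq] at h5
  exact h5.of_isCoprime_of_dvd_right (Dvd.intro_left _ rfl)

set_option maxHeartbeats 1000000 in
lemma psi' {m n x : ℤ} (hm : 0 < m) (hn : 0 < n) (hmo : m % 2 = 1)
    (hco : IsCoprime m n) (h : x ^ 2 + (m ^ 2 - 4 * n ^ 2) ^ 2 = (m * n) ^ 2) : False := by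
  have hm2 := sq_mod2 m
  have hn2 := sq_mod2 n
  have hx2 := sq_mod2 x
  -- coprimality facts
  have hco4n : IsCoprime m (4 * n ^ 2) := by
    have h4 : (4:ℤ) * n ^ 2 = 2 * (2 * n ^ 2) := by ring
    rw [h4]
    exact (odd_coprime_two hmo).mul_right ((odd_coprime_two hmo).mul_right (hco.pow_right))
  have hcomw : IsCoprime m (m ^ 2 - 4 * n ^ 2) := by
    have h5 := (hco4n.neg_right).add_mul_left_right m
    have heq : -(4 * n ^ 2) + m * m = m ^ 2 - 4 * n ^ 2 := by ring
    rwa [heq] at h5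
  have hconw : IsCoprime n (m ^ 2 - 4 * n ^ 2) := by
    have h5 := (hco.symm.pow_right (n := 2)).add_mul_left_right (-(4*n))
    have heq : m ^ 2 + n * (-(4*n)) = m ^ 2 - 4 * n ^ 2 := by ring
    rwa [heq] at h5
  -- n odd
  have hno : n % 2 = 1 := by
    by_contra hne
    have hne' : n % 2 = 0 := by omega
    have hw : (m ^ 2 - 4 * n ^ 2) % 2 = 1 := by omega
    have hw8 := odd_sq_mod8 hw
    have hmne : (m * n) % 2 = 0 := by rw [mul_comm]; exact even_mul hne'
    have hmn4 : (m * n) ^ 2 % 4 = 0 := even_sq_mod4 hmne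
    rcases Int.emod_two_eq x with hx | hx
    · have := even_sq_mod4 hx; omega
    · have := odd_sq_mod8 hx; omega
  have hwodd : (m ^ 2 - 4 * n ^ 2) % 2 = 1 := by omega
  have hmnodd : (m * n) % 2 = 1 := odd_mul_odd hmo hno
  have hw8 := odd_sq_mod8 hwodd
  have hmn8 := odd_sq_mod8 hmnodd
  -- x even
  have hxe : x % 2 = 0 := by
    rcases Int.emod_two_eq x with hx | hx
    · exact hx
    · have := odd_sq_mod8 hx; omega
  -- x ≠ 0
  have hx0 : x ≠ 0 := by
    rintro rfl
    have hsq : (m ^ 2 - 4 * n ^ 2 - m*n) * (m ^ 2 - 4 * n ^ 2 + m*n) = 0 := by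
      linear_combination h
    have hdvd : m ∣ 4 * n ^ 2 := by
      rcases mul_eq_zero.mp hsq with h1 | h1
      · exact ⟨m - n, by linear_combination -h1⟩
      · exact ⟨m + n, by linear_combination -h1⟩
    have hunit : IsUnit m := hco4n.isUnit_of_dvd' dvd_rfl hdvd
    have hm1 : m = 1 := by
      rcases Int.isUnit_iff.mp hunit with h1 | h1 <;> omega
    subst hm1
    have hnn : n ≤ n ^ 2 := self_le_sq (by omega)
    rcases mul_eq_zero.mp hsq with h1 | h1
    · have h2 : n ^ 2 * 4 = 1 - n := by linear_combination -h1
      omega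
    · have h2 : n ^ 2 * 4 = 1 + n := by linear_combination -h1
      omega
  obtain ⟨W, hWdef⟩ : ∃ W, W = |m ^ 2 - 4 * n ^ 2| := ⟨_, rfl⟩
  have hW0 : (0:ℤ) ≤ W := hWdef ▸ abs_nonneg _
  have habs : W = m ^ 2 - 4 * n ^ 2 ∨ W = -(m ^ 2 - 4 * n ^ 2) := hWdef ▸ abs_choice _
  have hWodd : W % 2 = 1 := by omega
  have hWpos : 0 < W := by omega
  have hWsq : W ^ 2 = (m ^ 2 - 4 * n ^ 2) ^ 2 := hWdef ▸ sq_abs _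
  have hx2pos : 0 < x ^ 2 := by positivity
  have hWlt : W < m * n := by
    apply lt_of_sq_lt_sq hW0 (le_of_lt (mul_pos hm hn))
    have := hWsq
    linarith only [h, hx2pos, hWsq]
  obtain ⟨x₁, hx₁⟩ : ∃ x₁, x = 2 * x₁ := ⟨x / 2, by omega⟩
  obtain ⟨u, hu⟩ : ∃ u, m * n - W = 2 * u := ⟨(m * n - W) / 2, by omega⟩
  obtain ⟨v, hv⟩ : ∃ v, m * n + W = 2 * v := ⟨(m * n + W) / 2, by omega⟩
  have hupos : 0 < u := by omega
  have hvpos : 0 < v := by omega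
  have huv : u * v = x₁ ^ 2 := by
    have e1 : 4 * (u * v) = (m*n) ^ 2 - W ^ 2 := by
      linear_combination (-(m*n + W)) * hu + (-(2*u)) * hv
    have e2 : 4 * (u * v) = 4 * x₁ ^ 2 := by
      rw [e1, hWsq]
      linear_combination -h + (x + 2*x₁) * hx₁
    linarith
  -- coprime u v
  have hbase : IsCoprime (m * n) (m ^ 2 - 4 * n ^ 2) := hcomw.mul_left hconw
  have hcomnw : IsCoprime (m * n) W := by
    rcases habs with h1 | h1
    · rw [h1]; exact hbase
    · rw [h1]; exact hbase.neg_right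
  have hmnuv : m * n = u + v := by omega
  have hWuv : W = v - u := by omega
  have hcouv : IsCoprime u v := by
    obtain ⟨α, β, hb⟩ := hcomnw
    exact ⟨α - β, α + β, by rw [hmnuv, hWuv] at hb; linear_combination hb⟩
  -- squares
  obtain ⟨r0, hr0⟩ := Int.sq_of_isCoprime hcouv huv
  have hr : u = r0 ^ 2 := by
    rcases hr0 with h1 | h1
    · exact h1
    · exfalso; linarith only [hupos, sq_nonneg r0, h1]
  obtain ⟨s0, hs0⟩ := Int.sq_of_isCoprime hcouv.symm (by rw [mul_comm]; exact huv)
  have hs : v = s0 ^ 2 := by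
    rcases hs0 with h1 | h1
    · exact h1
    · exfalso; linarith only [hvpos, sq_nonneg s0, h1]
  have hr0ne : r0 ≠ 0 := by rintro rfl; simp at hr; omega
  have hs0ne : s0 ≠ 0 := by rintro rfl; simp at hs; omega
  obtain ⟨r, hru, hrpos⟩ : ∃ r, u = r ^ 2 ∧ 0 < r :=
    ⟨|r0|, by rw [sq_abs]; exact hr, abs_pos.mpr hr0ne⟩
  obtain ⟨s, hsv, hspos⟩ : ∃ s, v = s ^ 2 ∧ 0 < s :=
    ⟨|s0|, by rw [sq_abs]; exact hs, abs_pos.mpr hs0ne⟩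
  rw [hru] at hu hupos huv
  rw [hsv] at hv hvpos
  have hrs_sum : r ^ 2 + s ^ 2 = m * n := by omega
  have hrs_diff : s ^ 2 - r ^ 2 = W := by omega
  have hsr : r < s :=
    lt_of_sq_lt_sq (le_of_lt hrpos) (le_of_lt hspos) (by linarith only [hrs_diff, hWpos])
  have hco_rs : IsCoprime r s := by
    apply coprime_of_sq
    rw [← hru, ← hsv]; exact hcouv
  -- parity of r, s
  have hr2 := sq_mod2 r
  have hs2 := sq_mod2 s
  -- e, f
  have hmn2n : m - 2*n ≠ 0 := by intro h1; omega
  obtain ⟨e, hedef⟩ : ∃ e, e = |m - 2*n| := ⟨_, rfl⟩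
  have hE0 : (0:ℤ) ≤ e := hedef ▸ abs_nonneg _
  have hEabs : e = m - 2*n ∨ e = -(m - 2*n) := hedef ▸ abs_choice _
  have heodd : e % 2 = 1 := by omega
  have hepos : 0 < e := by omega
  have hfpos : 0 < m + 2*n := by omega
  have hfodd : (m + 2*n) % 2 = 1 := by omega
  have he2 : e ^ 2 = (m - 2*n) ^ 2 := hedef ▸ sq_abs _
  have hef : e * (m + 2*n) = W := by
    have h1 : W = |(m - 2*n) * (m + 2*n)| := by
      rw [hWdef, show (m - 2*n) * (m + 2*n) = m^2 - 4*n^2 by ring]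
    rw [h1, abs_mul, ← hedef, abs_of_pos hfpos]
  have hsplit_eq : (s - r) * (s + r) = e * (m + 2*n) := by
    rw [hef]
    linear_combination hrs_diff
  have hcoef : IsCoprime e (m + 2*n) := by
    have hbase2 := coprime_pm hmo hco
    rcases hEabs with h1 | h1
    · rw [h1]; exact hbase2
    · rw [h1]; exact hbase2.neg_left
  -- four-split
  obtain ⟨P, Q, R, S, hP, hQ, hR, hS, hePQ, hfRS, hsrPR, hsrQS⟩ :=
    foursplit (by omega : 0 < s - r) hepos hfpos hsplit_eq
  -- oddness
  have hPodd : P % 2 = 1 := (odd_of_mul_odd (by rw [← hePQ]; exact heodd)).1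
  have hQodd : Q % 2 = 1 := (odd_of_mul_odd (by rw [← hePQ]; exact heodd)).2
  have hRodd : R % 2 = 1 := (odd_of_mul_odd (by rw [← hfRS]; exact hfodd)).1
  have hSodd : S % 2 = 1 := (odd_of_mul_odd (by rw [← hfRS]; exact hfodd)).2
  -- main equation
  have ee1 : (P*R) ^ 2 + (Q*S) ^ 2 = 2 * (m*n) := by
    rw [← hsrPR, ← hsrQS]
    linear_combination 2 * hrs_sum
  have ee2 : (R*S) ^ 2 - (P*Q) ^ 2 = 8 * (m*n) := by
    rw [← hePQ, ← hfRS]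
    linear_combination -he2
  have emain : S ^ 2 * (R ^ 2 - 4 * Q ^ 2) = P ^ 2 * (4 * R ^ 2 + Q ^ 2) := by
    linear_combination ee2 - 4 * ee1
  -- k-split
  have hcoSP : IsCoprime S P := by
    have h1 : S ∣ m + 2*n := ⟨R, by rw [hfRS]; ring⟩
    have h2 : P ∣ e := ⟨Q, by rw [hePQ]⟩
    exact (hcoef.symm.of_isCoprime_of_dvd_left h1).of_isCoprime_of_dvd_right h2
  obtain ⟨k, hk1, hk2⟩ := ksplit (by omega : S ≠ 0) hcoSP emain
  have hkpos : 0 < k := by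
    apply pos_of_mul_sq (by omega : S ≠ 0)
    rw [← hk1]; positivity
  have hd1 : k ∣ 17 * R ^ 2 := ⟨4 * S ^ 2 + P ^ 2, by linear_combination 4 * hk1 + hk2⟩
  have hd2 : k ∣ 17 * Q ^ 2 := ⟨S ^ 2 - 4 * P ^ 2, by linear_combination hk1 - 4 * hk2⟩
  have hcoRQ : IsCoprime R Q := by
    have h1 : R ∣ m + 2*n := ⟨S, hfRS⟩
    have h2 : Q ∣ e := ⟨P, by rw [hePQ]; ring⟩
    exact (hcoef.symm.of_isCoprime_of_dvd_left h1).of_isCoprime_of_dvd_right h2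
  have hk17 : k ∣ 17 := dvd17 hcoRQ hd1 hd2
  have hP8 := odd_sq_mod8 hPodd
  have hQ8 := odd_sq_mod8 hQodd
  have hR8 := odd_sq_mod8 hRodd
  have hS8 := odd_sq_mod8 hSodd
  rcases k_one_or_17 hkpos hk17 with rfl | rfl
  · omega
  · omega
/-- classification of A² = B² + 16 C², B odd -/
lemma triple16 {B C A : ℤ} (hB : 0 < B) (hC : 0 < C) (hA : 0 < A) (hBo : B % 2 = 1)
    (hco : IsCoprime B C) (h : A ^ 2 = B ^ 2 + 16 * C ^ 2) :
    ∃ u t : ℤ, 0 < u ∧ 0 < t ∧ u % 2 = 1 ∧ IsCoprime u t ∧ C = u * t ∧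
      A = u ^ 2 + 4 * t ^ 2 ∧ (B = u ^ 2 - 4 * t ^ 2 ∨ B = 4 * t ^ 2 - u ^ 2) := by
  have hpt : PythagoreanTriple B (4 * C) A := by
    unfold PythagoreanTriple; linear_combination -h
  have hco4 : Int.gcd B (4 * C) = 1 := by
    rw [← Int.isCoprime_iff_gcd_eq_one]
    have h4 : (4:ℤ) * C = 2 * (2 * C) := by ring
    rw [h4]
    exact ((odd_coprime_two hBo).mul_right ((odd_coprime_two hBo).mul_right hco))
  obtain ⟨m, n, h1, h2, h3, h4, h5, h6⟩ :=
    hpt.coprime_classification' hco4 hBo hA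
  have hmn : m * n = 2 * C := by linarith [h2]
  have hm : 0 < m := by
    rcases h6.lt_or_eq with hm | hm
    · exact hm
    · exfalso; rw [← hm] at hmn; simp at hmn; omega
  have hn : 0 < n := by nlinarith
  have hcomn : IsCoprime m n := Int.isCoprime_iff_gcd_eq_one.mpr h4
  rcases h5 with ⟨hme, hno⟩ | ⟨hmo, hne⟩
  · -- m even
    obtain ⟨t, rfl⟩ : ∃ t, m = 2 * t := ⟨m / 2, by omega⟩
    refine ⟨n, t, by omega, by omega, hno, ?_, by nlinarith, by rw [h3]; ring, Or.inr (by rw [h1]; ring)⟩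
    · exact (hcomn.symm.of_isCoprime_of_dvd_right ⟨2, by ring⟩)
  · -- n even
    obtain ⟨t, rfl⟩ : ∃ t, n = 2 * t := ⟨n / 2, by omega⟩
    refine ⟨m, t, by omega, by omega, hmo, ?_, by nlinarith, by rw [h3]; ring, Or.inl (by rw [h1]; ring)⟩
    · exact (hcomn.of_isCoprime_of_dvd_right ⟨2, by ring⟩)

lemma pos_factor {a b : ℤ} (h : 0 < a * b) (ha : 0 < a) : 0 < b := by nlinarith

set_option maxHeartbeats 1000000 in
lemma phi'_aux : ∀ M : ℕ, ∀ m n x : ℤ, m.natAbs ≤ M → 0 < m → 0 < n → m % 2 = 1 →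
    IsCoprime m n → x ^ 2 = m ^ 4 + 9 * m ^ 2 * n ^ 2 + 16 * n ^ 4 → False := by
  intro M
  induction M using Nat.strong_induction_on with
  | _ M IH =>
  intro m n x hM hm hn hmo hco h
  have hm2 := sq_mod2 m
  have hn2 := sq_mod2 n
  have hx2 := sq_mod2 x
  -- n even
  have hne : n % 2 = 0 := by
    by_contra hne'
    have hno : n % 2 = 1 := by omega
    have hiden : x ^ 2 = (m ^ 2 + 4 * n ^ 2) ^ 2 + (m * n) ^ 2 := by linear_combination h
    have hO : (m ^ 2 + 4 * n ^ 2) % 2 = 1 := by omega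
    have hO8 := odd_sq_mod8 hO
    have hB8 := odd_sq_mod8 (odd_mul_odd hmo hno)
    rcases Int.emod_two_eq x with hx | hx
    · have := even_sq_mod4 hx; omega
    · have := odd_sq_mod8 hx; omega
  obtain ⟨n₁, hn₁⟩ : ∃ n₁, n = 2 * n₁ := ⟨n / 2, by omega⟩
  have hn₁pos : 0 < n₁ := by omega
  have hcon1 : IsCoprime m n₁ := hco.of_isCoprime_of_dvd_right ⟨2, by omega⟩
  have hx0 : x ≠ 0 := by
    intro hx'
    rw [hx'] at h
    have : (0:ℤ) < m ^ 4 + 9 * m ^ 2 * n ^ 2 + 16 * n ^ 4 := by positivity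
    simp at h; omega
  obtain ⟨X, hXsq, hXpos⟩ : ∃ X, X ^ 2 = x ^ 2 ∧ 0 < X :=
    ⟨|x|, sq_abs x, abs_pos.mpr hx0⟩
  have hpyth : PythagoreanTriple (m ^ 2 + 16 * n₁ ^ 2) (2 * (m * n₁)) X := by
    unfold PythagoreanTriple
    have hXx : X ^ 2 = m ^ 4 + 9 * m ^ 2 * n ^ 2 + 16 * n ^ 4 := by rw [hXsq]; exact h
    rw [hn₁] at hXx
    linear_combination -hXx
  have hn₁2 := sq_mod2 n₁
  have hOodd : (m ^ 2 + 16 * n₁ ^ 2) % 2 = 1 := by omega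
  have hco16 : IsCoprime m (16 * n₁ ^ 2) := by
    rw [show (16:ℤ) * n₁ ^ 2 = 4 * (4 * n₁ ^ 2) by ring]
    exact (odd_coprime_four hmo).mul_right ((odd_coprime_four hmo).mul_right hcon1.pow_right)
  have hc1 : IsCoprime (m ^ 2 + 16 * n₁ ^ 2) m := by
    have h5 := hco16.add_mul_left_right m
    have heq : 16 * n₁ ^ 2 + m * m = m ^ 2 + 16 * n₁ ^ 2 := by ring
    rw [heq] at h5
    exact h5.symm
  have hc2 : IsCoprime (m ^ 2 + 16 * n₁ ^ 2) n₁ := by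
    have h5 := (hcon1.symm.pow_right (n := 2)).add_mul_left_right (16 * n₁)
    have heq : m ^ 2 + n₁ * (16 * n₁) = m ^ 2 + 16 * n₁ ^ 2 := by ring
    rw [heq] at h5
    exact h5.symm
  have hc3 : IsCoprime (m ^ 2 + 16 * n₁ ^ 2) (2:ℤ) := odd_coprime_two hOodd
  have hgcd : Int.gcd (m ^ 2 + 16 * n₁ ^ 2) (2 * (m * n₁)) = 1 :=
    Int.isCoprime_iff_gcd_eq_one.mp (hc3.mul_right (hc1.mul_right hc2))
  obtain ⟨α, β, h1, h2, h3, h4, h5, h6⟩ := hpyth.coprime_classification' hgcd hOodd hXpos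
  have hαβ : α * β = m * n₁ := by linarith
  have hαpos : 0 < α := by
    rcases h6.lt_or_eq with h' | h'
    · exact h'
    · exfalso
      rw [← h'] at hαβ
      simp at hαβ
      rcases hαβ with h'' | h'' <;> omega
  have hβpos : 0 < β := pos_factor (by rw [hαβ]; positivity) hαpos
  obtain ⟨A, B, C, D, hA, hB, hC, hD, hmAB, hn1CD, hαAC, hβBD⟩ :=
    foursplit hαpos hm hn₁pos hαβ
  have hAodd : A % 2 = 1 := (odd_of_mul_odd (by rw [← hmAB]; exact hmo)).1
  have hBodd : B % 2 = 1 := (odd_of_mul_odd (by rw [← hmAB]; exact hmo)).2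
  rw [hmAB, hn1CD, hαAC, hβBD] at h1
  have emain : A ^ 2 * (C ^ 2 - B ^ 2) = D ^ 2 * (B ^ 2 + 16 * C ^ 2) := by
    linear_combination -h1
  have hcoαβ : IsCoprime α β := Int.isCoprime_iff_gcd_eq_one.mpr h4
  have hcoAD : IsCoprime A D :=
    (hcoαβ.of_isCoprime_of_dvd_left ⟨C, hαAC⟩).of_isCoprime_of_dvd_right ⟨B, by rw [hβBD]; ring⟩
  have hcoBC : IsCoprime B C :=
    (hco.of_isCoprime_of_dvd_left ⟨A, by rw [hmAB]; ring⟩).of_isCoprime_of_dvd_right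
      ⟨2 * D, by rw [hn₁, hn1CD]; ring⟩
  have hcoBD : IsCoprime B D :=
    (hco.of_isCoprime_of_dvd_left ⟨A, by rw [hmAB]; ring⟩).of_isCoprime_of_dvd_right
      ⟨2 * C, by rw [hn₁, hn1CD]; ring⟩
  obtain ⟨k, hk1, hk2⟩ := ksplit (by omega : A ≠ 0) hcoAD emain
  have hkpos : 0 < k := by
    apply pos_of_mul_sq (by omega : A ≠ 0)
    rw [← hk1]; positivity
  have hd1 : k ∣ 17 * C ^ 2 := ⟨A ^ 2 + D ^ 2, by linear_combination hk1 + hk2⟩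
  have hd2 : k ∣ 17 * B ^ 2 := ⟨A ^ 2 - 16 * D ^ 2, by linear_combination hk1 - 16 * hk2⟩
  have hk17 : k ∣ 17 := dvd17 hcoBC hd2 hd1
  rcases k_one_or_17 hkpos hk17 with rfl | rfl
  · -- k = 1 : A² = B² + 16C², D² = C² - B² → Ψ'
    have hA2 : A ^ 2 = B ^ 2 + 16 * C ^ 2 := by linarith only [hk1]
    obtain ⟨u, t, hu, ht, huo, hcout, hCut, hAut, hBor⟩ :=
      triple16 hB hC hA hBodd hcoBC hA2
    have hB2 : B ^ 2 = (u ^ 2 - 4 * t ^ 2) ^ 2 := by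
      rcases hBor with h' | h' <;> (rw [h']; try ring)
    have heq : D ^ 2 + (u ^ 2 - 4 * t ^ 2) ^ 2 = (u * t) ^ 2 := by
      rw [← hB2, ← hCut]
      linarith only [hk2]
    exact psi' hu ht huo hcout heq
  · -- k = 17 : A² = B² + 16D², C² = A² + D² → smaller Φ'
    have heq17 : 17 * A ^ 2 = 17 * (B ^ 2 + 16 * D ^ 2) := by
      linear_combination -hk1 + 16 * hk2
    have hA2 : A ^ 2 = B ^ 2 + 16 * D ^ 2 := by linarith only [heq17]
    have heqC : 17 * C ^ 2 = 17 * (A ^ 2 + D ^ 2) := by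
      linear_combination hk1 + hk2
    have hC2 : C ^ 2 = A ^ 2 + D ^ 2 := by linarith only [heqC]
    obtain ⟨u, t, hu, ht, huo, hcout, hDut, hAut, hBor⟩ :=
      triple16 hB hD hA hBodd hcoBD hA2
    have hnew : C ^ 2 = u ^ 4 + 9 * u ^ 2 * t ^ 2 + 16 * t ^ 4 := by
      rw [hAut, hDut] at hC2
      linear_combination hC2
    have hult : u < A := by
      have h1 : u ≤ u ^ 2 := self_le_sq (by omega)
      have h2 : 0 < t ^ 2 := by positivity
      omega
    have hAlem : A ≤ m := by
      rw [hmAB]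
      exact le_mul_of_one_le_right (by omega) (by omega)
    exact IH u.natAbs (by omega) u t C (le_refl _) hu ht huo hcout hnew

lemma phi' {m n x : ℤ} (hm : 0 < m) (hn : 0 < n) (hmo : m % 2 = 1)
    (hco : IsCoprime m n) (h : x ^ 2 = m ^ 4 + 9 * m ^ 2 * n ^ 2 + 16 * n ^ 4) : False :=
  phi'_aux m.natAbs m n x le_rfl hm hn hmo hco h

lemma coprime_pm2 {b c : ℤ} (hodd : (c - b) % 2 = 1) (hco : IsCoprime b c) :
    IsCoprime (c - b) (c + b) := by
  obtain ⟨α, β, h1⟩ := hco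
  have h2 : IsCoprime (c - b) (2:ℤ) := odd_coprime_two hodd
  have h5 := h2.add_mul_left_right (-(β - α))
  have heq : (2:ℤ) + (c - b) * (-(β - α)) = (α + β) * (c + b) := by
    linear_combination (-2) * h1
  rw [heq] at h5
  exact h5.of_isCoprime_of_dvd_right (Dvd.intro_left _ rfl)

lemma twosplit {d C D : ℤ} (hd : 0 < d) (hdvd : d ∣ C * D) :
    ∃ d₁ d₂ : ℤ, 0 < d₁ ∧ 0 < d₂ ∧ d₁ ∣ C ∧ d₂ ∣ D ∧ d = d₁ * d₂ := by
  obtain ⟨p, r, hp, hr, hpr⟩ := exists_dvd_and_dvd_of_dvd_mul hdvd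
  have hp0 : p ≠ 0 := by rintro rfl; simp at hpr; omega
  rcases lt_or_gt_of_ne hp0 with hneg | hpos
  · exact ⟨-p, -r, by omega, by nlinarith, (neg_dvd).mpr hp, (neg_dvd).mpr hr, by rw [hpr]; ring⟩
  · exact ⟨p, r, hpos, by nlinarith, hp, hr, hpr⟩

set_option maxHeartbeats 1000000 in
/-- the A2 case of the S-system -/
lemma SlemKey {a d b c : ℤ} (ha : 0 < a) (hd : 0 < d) (hb : 0 < b) (hc : 0 < c)
    (hcad : IsCoprime a d) (hcbc : IsCoprime b c) (hae : a % 2 = 0) (hdo : d % 2 = 1)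
    (h1 : b * c = a ^ 2 + d ^ 2) (h2 : a * d = c ^ 2 - b ^ 2) : False := by
  have hb2 := sq_mod2 b
  have hc2 := sq_mod2 c
  -- b, c both odd
  have hnotbc : ¬(b % 2 = 0 ∧ c % 2 = 0) := by
    rintro ⟨e1, e2⟩
    have := hcbc.isUnit_of_dvd' (show (2:ℤ) ∣ b from ⟨b / 2, by omega⟩)
      (show (2:ℤ) ∣ c from ⟨c / 2, by omega⟩)
    rcases Int.isUnit_iff.mp this with h' | h' <;> omega
  have hadE : (a * d) % 2 = 0 := even_mul hae
  have hbo : b % 2 = 1 ∧ c % 2 = 1 := by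
    rcases Int.emod_two_eq b with h' | h' <;> rcases Int.emod_two_eq c with h'' | h''
    · exact absurd ⟨h', h''⟩ hnotbc
    · omega
    · omega
    · exact ⟨h', h''⟩
  have hbc : b < c := by
    apply lt_of_sq_lt_sq (by omega) (by omega)
    have : 0 < a * d := mul_pos ha hd
    linarith only [h2, this]
  obtain ⟨C, hC⟩ : ∃ C, c - b = 2 * C := ⟨(c - b) / 2, by omega⟩
  obtain ⟨D, hD⟩ : ∃ D, c + b = 2 * D := ⟨(c + b) / 2, by omega⟩
  have hCpos : 0 < C := by omega
  have hDpos : 0 < D := by omega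
  have hbDC : b = D - C := by omega
  have hcDC : c = D + C := by omega
  have hCD : IsCoprime C D := by
    obtain ⟨α, β, hb1⟩ := hcbc
    rw [hbDC, hcDC] at hb1
    exact ⟨β - α, α + β, by linear_combination hb1⟩
  have had4 : a * d = 4 * (C * D) := by
    linear_combination h2 + (c + b) * hC + (2 * C) * hD
  have hddvd : d ∣ C * D := by
    apply (odd_coprime_four hdo).dvd_of_dvd_mul_left
    exact ⟨a, by linarith⟩
  obtain ⟨d₁, d₂, hd₁, hd₂, hd₁C, hd₂D, hd12⟩ := twosplit hd hddvd
  obtain ⟨C', hC'⟩ := hd₁C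
  obtain ⟨D', hD'⟩ := hd₂D
  have hC'pos : 0 < C' := pos_factor (by rw [← hC']; exact hCpos) hd₁
  have hD'pos : 0 < D' := pos_factor (by rw [← hD']; exact hDpos) hd₂
  have haval : a = 4 * (C' * D') := by
    have hcan : (d₁ * d₂) * a = (d₁ * d₂) * (4 * (C' * D')) := by
      linear_combination (-a) * hd12 + had4 + (4 * D) * hC' + (4 * d₁ * C') * hD'
    exact mul_left_cancel₀ (by positivity) hcan
  have hd1odd : d₁ % 2 = 1 := (odd_of_mul_odd (by rw [← hd12]; exact hdo)).1
  have hd2odd : d₂ % 2 = 1 := (odd_of_mul_odd (by rw [← hd12]; exact hdo)).2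
  -- main equation
  rw [hbDC, hcDC, hC', hD', haval, hd12] at h1
  have emain : D' ^ 2 * (d₂ ^ 2 - 16 * C' ^ 2) = d₁ ^ 2 * (C' ^ 2 + d₂ ^ 2) := by
    linear_combination h1
  have hcoD'd₁ : IsCoprime D' d₁ :=
    (hCD.symm.of_isCoprime_of_dvd_left ⟨d₂, by rw [hD']; ring⟩).of_isCoprime_of_dvd_right
      ⟨C', by rw [hC']⟩
  obtain ⟨k, hk1, hk2⟩ := ksplit (by omega : D' ≠ 0) hcoD'd₁ emain
  have hkpos : 0 < k := by
    apply pos_of_mul_sq (by omega : D' ≠ 0)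
    rw [← hk1]; positivity
  have hdv1 : k ∣ 17 * d₂ ^ 2 := ⟨16 * D' ^ 2 + d₁ ^ 2, by linear_combination 16 * hk1 + hk2⟩
  have hdv2 : k ∣ 17 * C' ^ 2 := ⟨D' ^ 2 - d₁ ^ 2, by linear_combination hk1 - hk2⟩
  have hcod2C' : IsCoprime d₂ C' :=
    (hCD.symm.of_isCoprime_of_dvd_left ⟨D', by rw [hD']⟩).of_isCoprime_of_dvd_right
      ⟨d₁, by rw [hC']; ring⟩
  have hk17 : k ∣ 17 := dvd17 hcod2C' hdv1 hdv2
  have hcod12 : IsCoprime d₁ d₂ :=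
    (hCD.of_isCoprime_of_dvd_left ⟨C', hC'⟩).of_isCoprime_of_dvd_right ⟨D', hD'⟩
  rcases k_one_or_17 hkpos hk17 with rfl | rfl
  · -- k = 1 : d₂² = d₁² + 16C'², D'² = C'² + d₂² → Φ'
    have hk2' : d₂ ^ 2 = d₁ ^ 2 + 16 * C' ^ 2 := by linarith only [hk2]
    have hcod1C' : IsCoprime d₁ C' := by
      have h6 : IsCoprime d₁ (d₂ ^ 2) := hcod12.pow_right
      rw [show d₂ ^ 2 = 16 * C' ^ 2 + d₁ * d₁ by linarith only [hk2']] at h6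
      have h7 := h6.of_add_mul_left_right
      have h8 : IsCoprime d₁ (C' ^ 2) := h7.of_mul_right_right
      exact h8.of_isCoprime_of_dvd_right (dvd_pow_self C' two_ne_zero)
    obtain ⟨u, t, hu, ht, huo, hcout, hCut, hAut, hBor⟩ :=
      triple16 hd₁ hC'pos hd₂ hd1odd hcod1C' hk2'
    have hnew : D' ^ 2 = u ^ 4 + 9 * u ^ 2 * t ^ 2 + 16 * t ^ 4 := by
      rw [hCut, hAut] at hk1
      linear_combination -hk1
    exact phi' hu ht huo hcout hnew
  · -- k = 17 → Ψ'
    have heqD : 17 * D' ^ 2 = 17 * (C' ^ 2 + d₁ ^ 2) := by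
      linear_combination hk2 - hk1
    have hD2 : D' ^ 2 = C' ^ 2 + d₁ ^ 2 := by linarith only [heqD]
    have heqd2 : 17 * d₂ ^ 2 = 17 * (d₁ ^ 2 + 16 * D' ^ 2) := by
      linear_combination 16 * hk1 + hk2
    have hd2eq : d₂ ^ 2 = d₁ ^ 2 + 16 * D' ^ 2 := by linarith only [heqd2]
    obtain ⟨u, t, hu, ht, huo, hcout, hDut, hAut, hBor⟩ :=
      triple16 hd₁ hD'pos hd₂ hd1odd hcoD'd₁.symm hd2eq
    have hd₁sq : d₁ ^ 2 = (u ^ 2 - 4 * t ^ 2) ^ 2 := by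
      rcases hBor with h' | h' <;> (rw [h']; try ring)
    have heq : C' ^ 2 + (u ^ 2 - 4 * t ^ 2) ^ 2 = (u * t) ^ 2 := by
      rw [← hd₁sq, ← hDut]
      linarith only [hD2]
    exact psi' hu ht huo hcout heq

set_option maxHeartbeats 1000000 in
/-- the S-system has no solutions -/
lemma Slem {a d b c : ℤ} (ha : 0 < a) (hd : 0 < d) (hb : 0 < b) (hc : 0 < c)
    (hcad : IsCoprime a d) (hcbc : IsCoprime b c) (h1 : b * c = a ^ 2 + d ^ 2)
    (h2 : a * d = c ^ 2 - b ^ 2) : False := by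
  have hnotad : ¬(a % 2 = 0 ∧ d % 2 = 0) := by
    rintro ⟨e1, e2⟩
    have := hcad.isUnit_of_dvd' (show (2:ℤ) ∣ a from ⟨a / 2, by omega⟩)
      (show (2:ℤ) ∣ d from ⟨d / 2, by omega⟩)
    rcases Int.isUnit_iff.mp this with h' | h' <;> omega
  rcases Int.emod_two_eq a with hae | hao <;> rcases Int.emod_two_eq d with hde | hdo
  · exact absurd ⟨hae, hde⟩ hnotad
  · exact SlemKey ha hd hb hc hcad hcbc hae hdo h1 h2
  · exact SlemKey hd ha hb hc hcad.symm hcbc hde hao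
      (by linear_combination h1) (by linear_combination h2)
  · -- A1 : a, d both odd
    have hb2 := sq_mod2 b
    have hc2 := sq_mod2 c
    have hado : (a * d) % 2 = 1 := odd_mul_odd hao hdo
    have hbcpar : b % 2 + c % 2 = 1 := by omega
    have hbc : b < c := by
      apply lt_of_sq_lt_sq (by omega) (by omega)
      have : 0 < a * d := mul_pos ha hd
      linarith only [h2, this]
    have hcmb : (c - b) % 2 = 1 := by omega
    have hcpb : (c + b) % 2 = 1 := by omega
    have hcbpm : IsCoprime (c - b) (c + b) := coprime_pm2 hcmb hcbc
    have hsplit : a * d = (c - b) * (c + b) := by linear_combination h2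
    obtain ⟨P, Q, R, S, hP, hQ, hR, hS, hcbPQ, hcbRS, haPR, hdQS⟩ :=
      foursplit ha (by omega : 0 < c - b) (by omega : 0 < c + b) hsplit
    have hPodd : P % 2 = 1 := (odd_of_mul_odd (by rw [← hcbPQ]; exact hcmb)).1
    have hQodd : Q % 2 = 1 := (odd_of_mul_odd (by rw [← hcbPQ]; exact hcmb)).2
    have hRodd : R % 2 = 1 := (odd_of_mul_odd (by rw [← hcbRS]; exact hcpb)).1
    have hSodd : S % 2 = 1 := (odd_of_mul_odd (by rw [← hcbRS]; exact hcpb)).2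
    have hbc4 : 4 * (b * c) = (R * S) ^ 2 - (P * Q) ^ 2 := by
      linear_combination (c + b + R * S) * hcbRS - (c - b + P * Q) * hcbPQ
    rw [haPR, hdQS] at h1
    have emain : R ^ 2 * (S ^ 2 - 4 * P ^ 2) = Q ^ 2 * (P ^ 2 + 4 * S ^ 2) := by
      linear_combination -hbc4 + 4 * h1
    have hcoRQ : IsCoprime R Q :=
      (hcbpm.symm.of_isCoprime_of_dvd_left ⟨S, hcbRS⟩).of_isCoprime_of_dvd_right
        ⟨P, by rw [hcbPQ]; ring⟩
    obtain ⟨k, hk1, hk2⟩ := ksplit (by omega : R ≠ 0) hcoRQ emain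
    have hkpos : 0 < k := by
      apply pos_of_mul_sq (by omega : R ≠ 0)
      rw [← hk1]; positivity
    have hdv1 : k ∣ 17 * S ^ 2 := ⟨4 * R ^ 2 + Q ^ 2, by linear_combination 4 * hk1 + hk2⟩
    have hdv2 : k ∣ 17 * P ^ 2 := ⟨R ^ 2 - 4 * Q ^ 2, by linear_combination hk1 - 4 * hk2⟩
    have hcoSP : IsCoprime S P :=
      (hcbpm.symm.of_isCoprime_of_dvd_left ⟨R, by rw [hcbRS]; ring⟩).of_isCoprime_of_dvd_right
        ⟨Q, by rw [hcbPQ]⟩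
    have hk17 : k ∣ 17 := dvd17 hcoSP hdv1 hdv2
    have hP8 := odd_sq_mod8 hPodd
    have hQ8 := odd_sq_mod8 hQodd
    have hR8 := odd_sq_mod8 hRodd
    have hS8 := odd_sq_mod8 hSodd
    rcases k_one_or_17 hkpos hk17 with rfl | rfl
    · omega
    · omega

lemma coprime_abs {p r : ℤ} (h : IsCoprime p r) : IsCoprime |p| |r| := by
  rcases abs_choice p with h1 | h1 <;> rcases abs_choice r with h2 | h2 <;> rw [h1, h2]
  · exact h
  · exact h.neg_right
  · exact h.neg_left
  · exact h.neg_left.neg_right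

set_option maxHeartbeats 1000000 in
lemma Flem {p q Y : ℤ} (hco : IsCoprime p q)
    (h : Y ^ 2 = (p ^ 2 - 3 * p * q + q ^ 2) ^ 2 + 4 * (p ^ 2 - p * q) ^ 2) :
    p * (p - q) = 0 := by
  by_contra hB
  obtain ⟨r, hr⟩ : ∃ r, r = p - q := ⟨_, rfl⟩
  obtain ⟨A, hA⟩ : ∃ A, A = p ^ 2 - 3 * p * q + q ^ 2 := ⟨_, rfl⟩
  have hBr : p * r ≠ 0 := by rw [hr]; exact hB
  have hp0 : p ≠ 0 := by rintro rfl; simp at hBr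
  have hr0 : r ≠ 0 := by rintro rfl; simp at hBr
  have hArel : A = r ^ 2 + p * r - p ^ 2 := by rw [hA, hr]; ring
  have hYeq : Y ^ 2 = A ^ 2 + 4 * (p * r) ^ 2 := by
    rw [hA, hr]; linear_combination h
  have hcopr : IsCoprime p r := by
    have h5 := (hco.neg_right).add_mul_left_right 1
    have heq : -q + p * 1 = r := by rw [hr]; ring
    rwa [heq] at h5
  have hnot : ¬(p % 2 = 0 ∧ r % 2 = 0) := by
    rintro ⟨e1, e2⟩
    have := hcopr.isUnit_of_dvd' (show (2:ℤ) ∣ p from ⟨p / 2, by omega⟩)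
      (show (2:ℤ) ∣ r from ⟨r / 2, by omega⟩)
    rcases Int.isUnit_iff.mp this with h' | h' <;> omega
  have hp2 := sq_mod2 p
  have hr2 := sq_mod2 r
  have hA2 : A % 2 = 1 := by
    rcases Int.emod_two_eq p with hp' | hp' <;> rcases Int.emod_two_eq r with hr' | hr'
    · exact absurd ⟨hp', hr'⟩ hnot
    · have := even_mul (b := r) hp'; omega
    · have := even_mul (b := p) hr'; rw [mul_comm] at this; omega
    · have := odd_mul_odd hp' hr'; omega
  have hcoAp : IsCoprime p A := by
    have h5 := (hco.pow_right (n := 2)).add_mul_left_right (p - 3 * q)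
    have heq : q ^ 2 + p * (p - 3 * q) = A := by rw [hA]; ring
    rwa [heq] at h5
  have hcoAr : IsCoprime r A := by
    have h5 := ((hcopr.symm.pow_right (n := 2)).neg_right).add_mul_left_right (r + p)
    have heq : -p ^ 2 + r * (r + p) = A := by rw [hArel]; ring
    rwa [heq] at h5
  have hcoAB : IsCoprime A (p * r) := (hcoAp.symm).mul_right (hcoAr.symm)
  obtain ⟨Y', hY'sq, hY'0⟩ : ∃ Y', Y' ^ 2 = Y ^ 2 ∧ 0 ≤ Y' := ⟨|Y|, sq_abs Y, abs_nonneg Y⟩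
  have hYeq' : Y' ^ 2 = A ^ 2 + 4 * (p * r) ^ 2 := by rw [hY'sq]; exact hYeq
  have hA8 := odd_sq_mod8 hA2
  have hpr2 := sq_mod2 (p * r)
  have hY'odd : Y' % 2 = 1 := by
    rcases Int.emod_two_eq Y' with hy | hy
    · have := even_sq_mod4 hy; omega
    · exact hy
  have hB2pos : 0 < (p * r) ^ 2 := by positivity
  have hAbslt : |A| < Y' := by
    apply lt_of_sq_lt_sq (abs_nonneg A) hY'0
    rw [sq_abs]
    linarith only [hYeq', hB2pos]
  have hAle := le_abs_self A
  have hAle2 := neg_abs_le A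
  obtain ⟨u, hu⟩ : ∃ u, Y' - A = 2 * u := ⟨(Y' - A) / 2, by omega⟩
  obtain ⟨v, hv⟩ : ∃ v, Y' + A = 2 * v := ⟨(Y' + A) / 2, by omega⟩
  have hupos : 0 < u := by omega
  have hvpos : 0 < v := by omega
  have huv : u * v = (p * r) ^ 2 := by
    have e1 : 4 * (u * v) = Y' ^ 2 - A ^ 2 := by
      linear_combination (-(Y' + A)) * hu + (-(2 * u)) * hv
    linarith only [e1, hYeq']
  have hcoAY : IsCoprime A Y' := by
    have h5 : IsCoprime A (4 * (p * r) ^ 2) :=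
      (odd_coprime_four hA2).mul_right (hcoAB.pow_right)
    have h6 := h5.add_mul_left_right A
    have heq : 4 * (p * r) ^ 2 + A * A = Y' ^ 2 := by linarith only [hYeq']
    rw [heq] at h6
    exact h6.of_isCoprime_of_dvd_right (dvd_pow_self Y' two_ne_zero)
  have hcouv : IsCoprime u v := by
    obtain ⟨α, β, hb⟩ := hcoAY
    have hAuv : A = v - u := by omega
    have hYuv : Y' = u + v := by omega
    exact ⟨β - α, α + β, by rw [hAuv, hYuv] at hb; linear_combination hb⟩
  obtain ⟨e0, he0⟩ := Int.sq_of_isCoprime hcouv huv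
  have hue : u = e0 ^ 2 := by
    rcases he0 with h1 | h1
    · exact h1
    · exfalso; linarith only [hupos, sq_nonneg e0, h1]
  obtain ⟨f0, hf0⟩ := Int.sq_of_isCoprime hcouv.symm (by rw [mul_comm]; exact huv)
  have hvf : v = f0 ^ 2 := by
    rcases hf0 with h1 | h1
    · exact h1
    · exfalso; linarith only [hvpos, sq_nonneg f0, h1]
  have he0ne : e0 ≠ 0 := by rintro rfl; simp at hue; omega
  have hf0ne : f0 ≠ 0 := by rintro rfl; simp at hvf; omega
  obtain ⟨e, hue', hepos⟩ : ∃ e, u = e ^ 2 ∧ 0 < e :=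
    ⟨|e0|, by rw [sq_abs]; exact hue, abs_pos.mpr he0ne⟩
  obtain ⟨f, hvf', hfpos⟩ : ∃ f, v = f ^ 2 ∧ 0 < f :=
    ⟨|f0|, by rw [sq_abs]; exact hvf, abs_pos.mpr hf0ne⟩
  have hef_sq : (e * f) ^ 2 = (p * r) ^ 2 := by
    rw [← huv, hue', hvf']; ring
  have hef_abs : e * f = |p * r| := by
    have h1 : (e * f - |p * r|) * (e * f + |p * r|) = 0 := by
      have h2 : |p * r| ^ 2 = (p * r) ^ 2 := sq_abs _
      linear_combination hef_sq - h2
    rcases mul_eq_zero.mp h1 with h2 | h2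
    · linarith only [h2]
    · exfalso
      have h3 : 0 < e * f := mul_pos hepos hfpos
      have h4 : 0 < |p * r| := abs_pos.mpr hBr
      linarith only [h2, h3, h4]
  have hcoef : IsCoprime e f := by
    apply coprime_of_sq
    rw [← hue', ← hvf']; exact hcouv
  have hPR : |p| * |r| = |p * r| := (abs_mul p r).symm
  have hPpos : 0 < |p| := abs_pos.mpr hp0
  have hRpos : 0 < |r| := abs_pos.mpr hr0
  obtain ⟨a₁, b₁, c₁, d₁, ha₁, hb₁, hc₁, hd₁, hPab, hRcd, hea, hfb⟩ :=
    foursplit hepos hPpos hRpos (by rw [hef_abs, ← hPR])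
  -- relations
  have hpsq : p ^ 2 = (a₁ * b₁) ^ 2 := by rw [← hPab]; rw [sq_abs]
  have hrsq : r ^ 2 = (c₁ * d₁) ^ 2 := by rw [← hRcd]; rw [sq_abs]
  have hAfe : A = f ^ 2 - e ^ 2 := by
    rw [← hue', ← hvf']; omega
  have habsB := abs_choice (p * r)
  have hprv : p * r = a₁ * b₁ * (c₁ * d₁) ∨ p * r = -(a₁ * b₁ * (c₁ * d₁)) := by
    rcases habsB with h1 | h1
    · left
      have h2 : p * r = |p * r| := h1.symm
      rw [h2, ← hPR, hPab, hRcd]; try ring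
    · right
      have h2 : p * r = -|p * r| := by linarith only [h1]
      rw [h2, ← hPR, hPab, hRcd]; try ring
  -- coprimality facts
  have hcoa₁d₁ : IsCoprime a₁ d₁ :=
    (hcoef.of_isCoprime_of_dvd_left ⟨c₁, hea⟩).of_isCoprime_of_dvd_right ⟨b₁, by rw [hfb]; ring⟩
  have hcoPR : IsCoprime |p| |r| := coprime_abs hcopr
  have hcob₁c₁ : IsCoprime b₁ c₁ :=
    (hcoPR.of_isCoprime_of_dvd_left ⟨a₁, by rw [hPab]; ring⟩).of_isCoprime_of_dvd_right
      ⟨d₁, hRcd⟩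
  have hcoQsum : IsCoprime (a₁ ^ 2 + d₁ ^ 2) (a₁ * d₁) := by
    have h5 : IsCoprime a₁ (a₁ ^ 2 + d₁ ^ 2) := by
      have h6 := (hcoa₁d₁.pow_right (n := 2)).add_mul_left_right a₁
      have heq : d₁ ^ 2 + a₁ * a₁ = a₁ ^ 2 + d₁ ^ 2 := by ring
      rwa [heq] at h6
    have h7 : IsCoprime d₁ (a₁ ^ 2 + d₁ ^ 2) := by
      have h6 := (hcoa₁d₁.symm.pow_right (n := 2)).add_mul_left_right d₁
      have heq : a₁ ^ 2 + d₁ * d₁ = a₁ ^ 2 + d₁ ^ 2 := by ring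
      rwa [heq] at h6
    exact (h5.symm.mul_right h7.symm).symm.symm
  have hcobc_diff : IsCoprime (b₁ * c₁) (c₁ ^ 2 - b₁ ^ 2) := by
    have h5 : IsCoprime b₁ (c₁ ^ 2 - b₁ ^ 2) := by
      have h6 := (hcob₁c₁.pow_right (n := 2)).add_mul_left_right (-b₁)
      have heq : c₁ ^ 2 + b₁ * (-b₁) = c₁ ^ 2 - b₁ ^ 2 := by ring
      rwa [heq] at h6
    have h7 : IsCoprime c₁ (c₁ ^ 2 - b₁ ^ 2) := by
      have h6 := ((hcob₁c₁.symm.pow_right (n := 2)).neg_right).add_mul_left_right c₁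
      have heq : -b₁ ^ 2 + c₁ * c₁ = c₁ ^ 2 - b₁ ^ 2 := by ring
      rwa [heq] at h6
    exact h5.mul_left h7
  -- the key equation, case on sign
  have hsum_pos : 0 < a₁ ^ 2 + d₁ ^ 2 := by positivity
  have habcd_pos : 0 < a₁ * d₁ * (b₁ * c₁) := by positivity
  have hkey : (c₁ ^ 2 - b₁ ^ 2) * (a₁ ^ 2 + d₁ ^ 2) = a₁ * d₁ * (b₁ * c₁) ∨
      (b₁ ^ 2 - c₁ ^ 2) * (a₁ ^ 2 + d₁ ^ 2) = a₁ * d₁ * (b₁ * c₁) := by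
    rcases hprv with h1 | h1
    · right
      have h2 : A = (c₁*d₁) ^ 2 + a₁*b₁*(c₁*d₁) - (a₁*b₁) ^ 2 := by
        rw [hArel, ← h1, ← hpsq, ← hrsq]
      have h3 : A = (b₁*d₁) ^ 2 - (a₁*c₁) ^ 2 := by rw [hAfe, ← hea, ← hfb]
      linear_combination h2 - h3
    · left
      have h2 : A = (c₁*d₁) ^ 2 - a₁*b₁*(c₁*d₁) - (a₁*b₁) ^ 2 := by
        rw [hArel, ← hpsq, ← hrsq]
        linear_combination h1
      have h3 : A = (b₁*d₁) ^ 2 - (a₁*c₁) ^ 2 := by rw [hAfe, ← hea, ← hfb]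
      linear_combination h3 - h2
  -- conclude with Slem in both cases
  rcases hkey with hk | hk
  · -- c₁ > b₁ side : Slem a₁ d₁ b₁ c₁
    have hX : 0 < c₁ ^ 2 - b₁ ^ 2 :=
      pos_factor (by rw [mul_comm] at hk; rw [hk]; exact habcd_pos) hsum_pos
    have hdvd : (a₁ ^ 2 + d₁ ^ 2) ∣ b₁ * c₁ := by
      apply hcoQsum.dvd_of_dvd_mul_left
      exact ⟨c₁ ^ 2 - b₁ ^ 2, by linear_combination -hk⟩
    obtain ⟨E, hE⟩ := hdvd
    have hXE : c₁ ^ 2 - b₁ ^ 2 = a₁ * d₁ * E := by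
      have hcan : (a₁ ^ 2 + d₁ ^ 2) * (c₁ ^ 2 - b₁ ^ 2) =
          (a₁ ^ 2 + d₁ ^ 2) * (a₁ * d₁ * E) := by
        linear_combination hk + (a₁ * d₁) * hE
      exact mul_left_cancel₀ (by positivity) hcan
    have hEunit : IsUnit E := by
      apply hcobc_diff.isUnit_of_dvd'
      · exact ⟨a₁ ^ 2 + d₁ ^ 2, by rw [hE]; ring⟩
      · exact ⟨a₁ * d₁, by rw [hXE]; ring⟩
    have hE1 : E = 1 := by
      rcases Int.isUnit_iff.mp hEunit with h' | h'
      · exact h'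
      · exfalso; rw [h'] at hE; linarith only [hE, hsum_pos, mul_pos hb₁ hc₁]
    rw [hE1] at hE hXE
    exact Slem ha₁ hd₁ hb₁ hc₁ hcoa₁d₁ hcob₁c₁ (by linarith only [hE])
      (by linarith only [hXE])
  · -- b₁ > c₁ side : Slem a₁ d₁ c₁ b₁
    have hX : 0 < b₁ ^ 2 - c₁ ^ 2 :=
      pos_factor (by rw [mul_comm] at hk; rw [hk]; exact habcd_pos) hsum_pos
    have hdvd : (a₁ ^ 2 + d₁ ^ 2) ∣ b₁ * c₁ := by
      apply hcoQsum.dvd_of_dvd_mul_left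
      exact ⟨b₁ ^ 2 - c₁ ^ 2, by linear_combination -hk⟩
    obtain ⟨E, hE⟩ := hdvd
    have hXE : b₁ ^ 2 - c₁ ^ 2 = a₁ * d₁ * E := by
      have hcan : (a₁ ^ 2 + d₁ ^ 2) * (b₁ ^ 2 - c₁ ^ 2) =
          (a₁ ^ 2 + d₁ ^ 2) * (a₁ * d₁ * E) := by
        linear_combination hk + (a₁ * d₁) * hE
      exact mul_left_cancel₀ (by positivity) hcan
    have hEunit : IsUnit E := by
      apply hcobc_diff.isUnit_of_dvd'
      · exact ⟨a₁ ^ 2 + d₁ ^ 2, by rw [hE]; ring⟩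
      · exact ⟨-(a₁ * d₁), by linear_combination -hXE⟩
    have hE1 : E = 1 := by
      rcases Int.isUnit_iff.mp hEunit with h' | h'
      · exact h'
      · exfalso; rw [h'] at hE; linarith only [hE, hsum_pos, mul_pos hb₁ hc₁]
    rw [hE1] at hE hXE
    exact Slem ha₁ hd₁ hc₁ hb₁ hcoa₁d₁ hcob₁c₁.symm (by linarith only [hE])
      (by linarith only [hXE])

lemma Qlem {z y : ℚ} (h : y ^ 2 = 5 * z ^ 4 - 14 * z ^ 3 + 15 * z ^ 2 - 6 * z + 1) :
    z = 0 ∨ z = 1 := by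
  have hden : ((z.den : ℚ)) ≠ 0 := by
    exact_mod_cast z.den_ne_zero
  have hzval : (z.num : ℚ) = z * (z.den : ℚ) := (div_eq_iff hden).mp (Rat.num_div_den z)
  set Y : ℚ := y * (z.den : ℚ) ^ 2 with hYdef
  have hYsq : Y ^ 2 = (((z.num ^ 2 - 3 * z.num * z.den + z.den ^ 2) ^ 2 +
      4 * (z.num ^ 2 - z.num * z.den) ^ 2 : ℤ) : ℚ) := by
    push_cast
    rw [hYdef]
    have expand : (y * (z.den : ℚ) ^ 2) ^ 2 = y ^ 2 * (z.den : ℚ) ^ 4 := by ring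
    rw [expand, h, hzval]
    ring
  have hYden : Y.den = 1 := by
    have h1 : (Y * Y).den = Y.den * Y.den := Rat.mul_self_den Y
    have h2 : Y * Y = Y ^ 2 := by ring
    rw [h2, hYsq] at h1
    have h3 : ((((z.num ^ 2 - 3 * z.num * z.den + z.den ^ 2) ^ 2 +
        4 * (z.num ^ 2 - z.num * z.den) ^ 2 : ℤ) : ℚ)).den = 1 := Rat.den_intCast _
    rw [h3] at h1
    have h4 : Y.den ∣ 1 := ⟨Y.den, h1⟩
    exact Nat.dvd_one.mp h4
  have hYint : (Y.num : ℚ) = Y := by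
    rw [← Rat.num_div_den Y, hYden]
    simp
  have hint : Y.num ^ 2 = (z.num ^ 2 - 3 * z.num * (z.den:ℤ) + (z.den:ℤ) ^ 2) ^ 2 +
      4 * (z.num ^ 2 - z.num * (z.den:ℤ)) ^ 2 := by
    have h1 : ((Y.num ^ 2 : ℤ) : ℚ) = (((z.num ^ 2 - 3 * z.num * z.den + z.den ^ 2) ^ 2 +
        4 * (z.num ^ 2 - z.num * z.den) ^ 2 : ℤ) : ℚ) := by
      push_cast
      push_cast at hYsq
      rw [hYint]
      linear_combination hYsq
    exact_mod_cast h1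
  have hcop : IsCoprime z.num ((z.den : ℤ)) := by
    rw [Int.isCoprime_iff_gcd_eq_one]
    exact z.reduced
  have hpq := Flem hcop hint
  rcases mul_eq_zero.mp hpq with h1 | h1
  · left
    exact Rat.num_eq_zero.mp h1
  · right
    have h2 : (z.num : ℚ) = (z.den : ℚ) := by
      have : z.num = (z.den : ℤ) := by omega
      exact_mod_cast this
    have h3 : z = (z.num : ℚ) / (z.den : ℚ) := (Rat.num_div_den z).symm
    rw [h3, h2, div_self hden]

/-- The only rational points on
`c²z² - 3c²z + c² + cz² + cz - c - z² + z = 0` are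
`(0,0), (0,1), (1,0), (1,1)` (graph N3E3). -/
theorem stmt_5 :
    {p : ℚ × ℚ |
        p.1 ^ 2 * p.2 ^ 2 - 3 * p.1 ^ 2 * p.2 + p.1 ^ 2 + p.1 * p.2 ^ 2 +
          p.1 * p.2 - p.1 - p.2 ^ 2 + p.2 = 0} =
      ({(0, 0), (0, 1), (1, 0), (1, 1)} : Set (ℚ × ℚ)) := by
  ext ⟨c, z⟩
  simp only [Set.mem_setOf_eq, Set.mem_insert_iff, Set.mem_singleton_iff, Prod.mk.injEq]
  constructor
  · intro h
    have hy : (2 * (z ^ 2 - 3 * z + 1) * c + (z ^ 2 + z - 1)) ^ 2 =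
        5 * z ^ 4 - 14 * z ^ 3 + 15 * z ^ 2 - 6 * z + 1 := by
      linear_combination (4 * (z ^ 2 - 3 * z + 1)) * h
    rcases Qlem hy with rfl | rfl
    · -- z = 0 : c² - c = 0
      have hc : c * (c - 1) = 0 := by linear_combination h
      rcases mul_eq_zero.mp hc with h1 | h1
      · exact Or.inl ⟨h1, rfl⟩
      · exact Or.inr (Or.inr (Or.inl ⟨by linarith, rfl⟩))
    · -- z = 1 : -c² + c = 0
      have hc : c * (c - 1) = 0 := by linear_combination -h
      rcases mul_eq_zero.mp hc with h1 | h1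
      · exact Or.inr (Or.inl ⟨h1, rfl⟩)
      · exact Or.inr (Or.inr (Or.inr ⟨by linarith, rfl⟩))
  · rintro (⟨rfl, rfl⟩ | ⟨rfl, rfl⟩ | ⟨rfl, rfl⟩ | ⟨rfl, rfl⟩) <;> norm_num
end

section
/- The set of pairs (x, y) ∈ ℚ × ℚ satisfying y² = x⁴ − 14x³ + 15x² − 6x + 1 is infinite. Consequently, there are infinitely many pairwise non-linearly-equivalent quadratic rational maps over ℚ realizing the preperiodicity graph R3P5, i.e. having a rational critical 3-cycle, a rational 2-cycle with rational non-periodic preimages of both points of the 2-cycle, and a rational second preimage of one of those preimages. -/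
namespace Stmt19

local notation "K" => ℚ_[2]

lemma norm_add_left {a b : K} (h : ‖b‖ < ‖a‖) : ‖a + b‖ = ‖a‖ := by
  rw [Padic.add_eq_max_of_ne (ne_of_gt h), max_eq_left h.le]

lemma norm_two : ‖(2 : K)‖ = 1/2 := by
  have := @Padic.norm_p 2 _
  norm_num at this ⊢
  exact this

lemma pow4le {i j : ℕ} (h : i ≤ j) : (4:ℝ)^i ≤ 4^j :=
  pow_le_pow_right₀ (by norm_num) h

lemma pow4lt {i j : ℕ} (h : i < j) : (4:ℝ)^i < 4^j :=
  pow_lt_pow_right₀ (by norm_num) h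

lemma norm_ofNat_le (n : ℕ) : ‖((n:ℕ) : K)‖ ≤ 1 := by
  have : ((n:ℤ) : K) = ((n:ℕ) : K) := by push_cast; ring
  rw [← this]; exact Padic.norm_int_le_one _

/-- doubling on v² = X³ - 3X² + 8X + 16 -/
def dbl (P : ℚ × ℚ) : ℚ × ℚ :=
  ((P.1^4 - 16*P.1^2 - 128*P.1 + 256)/(4*P.2^2),
   ((3*P.1^2 - 6*P.1 + 8)/(2*P.2)) * (P.1 - (P.1^4 - 16*P.1^2 - 128*P.1 + 256)/(4*P.2^2)) - P.2)

lemma dbl_curve {X v : ℚ} (hv : v ≠ 0) (h : v^2 = X^3 - 3*X^2 + 8*X + 16) :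
    (dbl (X,v)).2^2 = (dbl (X,v)).1^3 - 3*(dbl (X,v)).1^2 + 8*(dbl (X,v)).1 + 16 := by
  simp only [dbl]
  field_simp
  linear_combination ((3145728:ℚ) + (256:ℚ)*v^6 + (-5242880:ℚ)*X^1 + (-98304:ℚ)*X^1*v^2 + (2490368:ℚ)*X^2 + (114688:ℚ)*X^2*v^2 + (768:ℚ)*X^2*v^4 + (-65536:ℚ)*X^3 + (-26624:ℚ)*X^3*v^2 + (-512:ℚ)*X^3*v^4 + (-94208:ℚ)*X^4 + (-4096:ℚ)*X^4*v^2 + (-36864:ℚ)*X^5 + (-384:ℚ)*X^5*v^2 + (6656:ℚ)*X^6 + (256:ℚ)*X^6*v^2 + (1024:ℚ)*X^7 + (48:ℚ)*X^8 + (-32:ℚ)*X^9) * h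

lemma vnorm {X v : ℚ} (h : v^2 = X^3 - 3*X^2 + 8*X + 16) {m : ℕ} (hm : 1 ≤ m)
    (hX : ‖(X : K)‖ = 4^m) : ‖(v : K)‖ = 8^m := by
  have hcast := congrArg (fun q : ℚ => (q : K)) h
  push_cast at hcast
  set a : K := (X : K) with ha
  have hc2 : ((v:K))^2 = a^3 + (-(3*a^2) + (8*a + 16)) := by rw [hcast]; ring
  have hb3 : ‖(3 : K)‖ ≤ 1 := by have := norm_ofNat_le 3; norm_num at this ⊢; exact this
  have hb8 : ‖(8 : K)‖ ≤ 1 := by have := norm_ofNat_le 8; norm_num at this ⊢; exact this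
  have hb16 : ‖(16 : K)‖ ≤ 1 := by have := norm_ofNat_le 16; norm_num at this ⊢; exact this
  have h1 : ‖-(3*a^2)‖ ≤ 4^(m*2) := by
    rw [norm_neg, norm_mul, norm_pow, hX, ← pow_mul]
    nlinarith [pow_pos (by norm_num : (0:ℝ) < 4) (m*2), norm_nonneg (3:K)]
  have h2 : ‖8*a‖ ≤ 4^(m*2) := by
    rw [norm_mul, hX]
    have h' : ‖(8:K)‖ * (4:ℝ)^m ≤ 1 * 4^m :=
      mul_le_mul_of_nonneg_right hb8 (by positivity)
    calc ‖(8:K)‖ * (4:ℝ)^m ≤ 1 * 4^m := h'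
      _ = 4^m := one_mul _
      _ ≤ 4^(m*2) := pow4le (by omega)
  have h16 : ‖(16:K)‖ ≤ (4:ℝ)^(m*2) :=
    le_trans hb16 (le_trans (by norm_num) (pow4le (Nat.zero_le _)))
  have hlt : ‖-(3*a^2) + (8*a + 16)‖ < ‖a^3‖ := by
    have l1 : ‖8*a + 16‖ ≤ 4^(m*2) := le_trans (Padic.nonarchimedean _ _) (max_le h2 h16)
    have l2 : ‖-(3*a^2) + (8*a + 16)‖ ≤ 4^(m*2) :=
      le_trans (Padic.nonarchimedean _ _) (max_le h1 l1)
    rw [norm_pow, hX, ← pow_mul]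
    exact lt_of_le_of_lt l2 (pow4lt (by omega))
  have hnorm2 : ‖(v:K)‖^2 = (4:ℝ)^(m*3) := by
    rw [← norm_pow, hc2, norm_add_left hlt, norm_pow, hX, ← pow_mul]
  have h8 : ((8:ℝ)^m)^2 = (4:ℝ)^(m*3) := by
    rw [show (8:ℝ) = 2^3 by norm_num, show (4:ℝ) = 2^2 by norm_num,
      ← pow_mul, ← pow_mul, ← pow_mul]
    congr 1; omega
  nlinarith [hnorm2, h8, norm_nonneg ((v:K)), pow_pos (by norm_num : (0:ℝ) < 8) m]

lemma vne {X v : ℚ} (h : v^2 = X^3 - 3*X^2 + 8*X + 16) {m : ℕ} (hm : 1 ≤ m)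
    (hX : ‖(X : K)‖ = 4^m) : v ≠ 0 := by
  intro h0
  have := vnorm h hm hX
  rw [h0] at this
  push_cast at this
  rw [norm_zero] at this
  have h8 : (0:ℝ) < 8^m := by positivity
  exact absurd this.symm h8.ne'

lemma dbl_norm {X v : ℚ} (h : v^2 = X^3 - 3*X^2 + 8*X + 16) {m : ℕ} (hm : 1 ≤ m)
    (hX : ‖(X : K)‖ = 4^m) : ‖(((dbl (X,v)).1 : ℚ) : K)‖ = 4^(m+1) := by
  have hv : v ≠ 0 := vne h hm hX
  have hv8 : ‖(v : K)‖ = 8^m := vnorm h hm hX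
  have hcast : (((dbl (X,v)).1 : ℚ) : K)
      = ((X:K)^4 + (-(16*(X:K)^2) + (-(128*(X:K)) + 256))) / (4*(v:K)^2) := by
    simp only [dbl]
    push_cast
    ring
  set a : K := (X : K)
  have hb16 : ‖(16 : K)‖ ≤ 1 := by have := norm_ofNat_le 16; norm_num at this ⊢; exact this
  have hb128 : ‖(128 : K)‖ ≤ 1 := by have := norm_ofNat_le 128; norm_num at this ⊢; exact this
  have hb256 : ‖(256 : K)‖ ≤ 1 := by have := norm_ofNat_le 256; norm_num at this ⊢; exact this
  have one_le : (1:ℝ) ≤ 4^(m*2) := one_le_pow₀ (by norm_num)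
  have h1 : ‖-(16*a^2)‖ ≤ 4^(m*2) := by
    rw [norm_neg, norm_mul, norm_pow, hX, ← pow_mul]
    nlinarith [pow_pos (by norm_num : (0:ℝ) < 4) (m*2), norm_nonneg (16:K)]
  have h2 : ‖-(128*a)‖ ≤ 4^(m*2) := by
    rw [norm_neg, norm_mul, hX]
    calc ‖(128:K)‖ * (4:ℝ)^m ≤ 1 * 4^m :=
          mul_le_mul_of_nonneg_right hb128 (by positivity)
      _ = 4^m := one_mul _
      _ ≤ 4^(m*2) := pow4le (by omega)
  have hlt : ‖-(16*a^2) + (-(128*a) + 256)‖ < ‖a^4‖ := by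
    have l1 : ‖-(128*a) + 256‖ ≤ 4^(m*2) := le_trans (Padic.nonarchimedean _ _)
      (max_le h2 (le_trans hb256 one_le))
    have l2 : ‖-(16*a^2) + (-(128*a) + 256)‖ ≤ 4^(m*2) :=
      le_trans (Padic.nonarchimedean _ _) (max_le h1 l1)
    rw [norm_pow, hX, ← pow_mul]
    exact lt_of_le_of_lt l2 (pow4lt (by omega))
  have hnum : ‖a^4 + (-(16*a^2) + (-(128*a) + 256))‖ = (4:ℝ)^(m*4) := by
    rw [norm_add_left hlt, norm_pow, hX, ← pow_mul]
  have h4 : ‖(4:K)‖ = 1/4 := by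
    rw [show (4:K) = 2^2 by norm_num, norm_pow, norm_two]; norm_num
  have hden : ‖4*(v:K)^2‖ = (4:ℝ)^(m*3) / 4 := by
    rw [norm_mul, norm_pow, hv8, h4]
    rw [show (8:ℝ) = 2^3 by norm_num, show (4:ℝ) = 2^2 by norm_num,
      ← pow_mul, ← pow_mul, ← pow_mul]
    rw [show 3*(m*2) = 2*(m*3) by ring]
    ring
  have hdenne : (4:ℝ)^(m*3) / 4 ≠ 0 := by positivity
  rw [hcast, norm_div, hnum, hden, div_div_eq_mul_div]
  rw [div_eq_iff (by positivity : ((4:ℝ)^(m*3)) ≠ 0)]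
  rw [← pow_add, ← pow_succ]
  congr 1
  omega

/-- map to the quartic curve -/
def phi (P : ℚ × ℚ) : ℚ × ℚ :=
  (2*P.1/(3*P.1 - 4 - P.2),
   ((6-P.1)/2)*(2*P.1/(3*P.1 - 4 - P.2))^2 + 1 - 3*(2*P.1/(3*P.1 - 4 - P.2)))

lemma den_norm {X v : ℚ} (h : v^2 = X^3 - 3*X^2 + 8*X + 16) {m : ℕ} (hm : 1 ≤ m)
    (hX : ‖(X : K)‖ = 4^m) : ‖((3*X - 4 - v : ℚ) : K)‖ = 8^m := by
  have hv8 : ‖(v : K)‖ = 8^m := vnorm h hm hX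
  have hcast : ((3*X - 4 - v : ℚ) : K) = -(v:K) + (3*(X:K) + (-4)) := by push_cast; ring
  have hb3 : ‖(3 : K)‖ ≤ 1 := by have := norm_ofNat_le 3; norm_num at this ⊢; exact this
  have hb4 : ‖(-4 : K)‖ ≤ 1 := by
    rw [norm_neg]; have := norm_ofNat_le 4; norm_num at this ⊢; exact this
  have h48 : (4:ℝ)^m < 8^m := by
    apply pow_lt_pow_left₀ (by norm_num) (by norm_num)
    omega
  have h3a : ‖3*(X:K)‖ ≤ 4^m := by
    rw [norm_mul, hX]
    nlinarith [pow_pos (by norm_num : (0:ℝ) < 4) m, norm_nonneg (3:K)]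
  have hlt : ‖3*(X:K) + (-4)‖ < ‖-(v:K)‖ := by
    rw [norm_neg, hv8]
    refine lt_of_le_of_lt (le_trans (Padic.nonarchimedean _ _) (max_le h3a ?_)) h48
    exact le_trans hb4 (one_le_pow₀ (by norm_num))
  rw [hcast, norm_add_left hlt, norm_neg, hv8]

lemma den_ne {X v : ℚ} (h : v^2 = X^3 - 3*X^2 + 8*X + 16) {m : ℕ} (hm : 1 ≤ m)
    (hX : ‖(X : K)‖ = 4^m) : 3*X - 4 - v ≠ 0 := by
  intro h0
  have hd := den_norm h hm hX
  rw [h0] at hd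
  push_cast at hd
  rw [norm_zero] at hd
  exact absurd hd.symm (by positivity : (0:ℝ) < 8^m).ne'

lemma phi_quartic {X v : ℚ} (h : v^2 = X^3 - 3*X^2 + 8*X + 16) {m : ℕ} (hm : 1 ≤ m)
    (hX : ‖(X : K)‖ = 4^m) :
    (phi (X,v)).2^2 = (phi (X,v)).1^4 - 14*(phi (X,v)).1^3 + 15*(phi (X,v)).1^2
      - 6*(phi (X,v)).1 + 1 := by
  have hd : 3*X - 4 - v ≠ 0 := den_ne h hm hX
  have hd2 : X*3 - 4 - v ≠ 0 := by intro hz; apply hd; linarith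
  simp only [phi]
  field_simp
  linear_combination ((-4:ℚ)*X^3) * h

lemma phi_norm {X v : ℚ} (h : v^2 = X^3 - 3*X^2 + 8*X + 16) {m : ℕ} (hm : 1 ≤ m)
    (hX : ‖(X : K)‖ = 4^m) : ‖(((phi (X,v)).1 : ℚ) : K)‖ = (1/2:ℝ)^(m+1) := by
  have hd : 3*X - 4 - v ≠ 0 := den_ne h hm hX
  have hdn := den_norm h hm hX
  have hcast : (((phi (X,v)).1 : ℚ) : K) = 2*(X:K) / ((3*X - 4 - v : ℚ) : K) := by
    simp only [phi]
    push_cast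
    ring
  rw [hcast, norm_div, norm_mul, norm_two, hX, hdn]
  rw [show (4:ℝ) = 2^2 by norm_num, show (8:ℝ) = 2^3 by norm_num,
    show (1/2:ℝ) = (2:ℝ)⁻¹ by norm_num, ← pow_mul, ← pow_mul]
  have hre : (2:ℝ)⁻¹ * 2^(2*m) / 2^(3*m) = 2^(2*m) / (2^(3*m) * 2) := by ring
  rw [hre, inv_pow, inv_eq_one_div, div_eq_div_iff (by positivity) (by positivity)]
  rw [one_mul, ← pow_add, ← pow_succ]
  congr 1
  omega

/-- the sequence of points obtained by repeated doubling -/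
def seq : ℕ → ℚ × ℚ
  | 0 => (369/16, 6673/64)
  | k+1 => dbl (seq k)

lemma seq_inv (k : ℕ) :
    (seq k).2^2 = (seq k).1^3 - 3*(seq k).1^2 + 8*(seq k).1 + 16 ∧
    ‖(((seq k).1 : ℚ) : K)‖ = 4^(k+2) := by
  induction k with
  | zero =>
    constructor
    · norm_num [seq]
    · show ‖((369/16 : ℚ) : K)‖ = 4^2
      have h369 : ‖((369 : ℤ) : K)‖ = 1 := by
        refine le_antisymm (Padic.norm_int_le_one _) ?_
        by_contra hlt
        push_neg at hlt
        have := (Padic.norm_intCast_lt_one_iff (k := 369)).mp hlt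
        norm_num at this
      have h16 : ‖(16 : K)‖ = 1/16 := by
        rw [show (16:K) = 2^4 by norm_num, norm_pow, norm_two]; norm_num
      have hc : ((369/16 : ℚ) : K) = ((369:ℤ) : K) / (16 : K) := by push_cast; ring
      rw [hc, norm_div, h369, h16]
      norm_num
  | succ k ih =>
    obtain ⟨hc, hn⟩ := ih
    have hm : 1 ≤ k + 2 := by omega
    have hc' : ((seq k).2)^2 = ((seq k).1)^3 - 3*((seq k).1)^2 + 8*((seq k).1) + 16 := hc
    have hv : (seq k).2 ≠ 0 := vne hc' hm hn
    have hpair : ((seq k).1, (seq k).2) = seq k := rfl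
    constructor
    · show (dbl (seq k)).2^2 = _
      rw [← hpair]
      exact dbl_curve hv hc'
    · show ‖(((dbl (seq k)).1 : ℚ) : K)‖ = 4^(k+1+2)
      rw [← hpair]
      have := dbl_norm hc' hm hn
      rw [show k+1+2 = (k+2)+1 by omega]
      exact this

lemma seq_quartic (k : ℕ) :
    (phi (seq k)).2^2 = (phi (seq k)).1^4 - 14*(phi (seq k)).1^3 + 15*(phi (seq k)).1^2
      - 6*(phi (seq k)).1 + 1 := by
  obtain ⟨hc, hn⟩ := seq_inv k
  have hpair : ((seq k).1, (seq k).2) = seq k := rfl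
  rw [← hpair]
  exact phi_quartic hc (by omega : 1 ≤ k+2) hn

lemma seq_phi_norm (k : ℕ) :
    ‖(((phi (seq k)).1 : ℚ) : K)‖ = (1/2:ℝ)^(k+3) := by
  obtain ⟨hc, hn⟩ := seq_inv k
  have hpair : ((seq k).1, (seq k).2) = seq k := rfl
  rw [← hpair]
  have := phi_norm hc (by omega : 1 ≤ k+2) hn
  rw [show k+3 = (k+2)+1 by omega]
  exact this

lemma x_injective : Function.Injective (fun k : ℕ => (phi (seq k)).1) := by
  intro j k hjk
  have hjk' : ((phi (seq j)).1 : ℚ) = (phi (seq k)).1 := hjk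
  by_contra hne
  have hnorm : ((1/2:ℝ))^(j+3) = ((1/2:ℝ))^(k+3) := by
    rw [← seq_phi_norm j, ← seq_phi_norm k, hjk']
  rcases Nat.lt_or_ge j k with hlt | hge
  · have := pow_lt_pow_right_of_lt_one₀ (by norm_num : (0:ℝ) < 1/2)
      (by norm_num : (1/2:ℝ) < 1) (by omega : j+3 < k+3)
    linarith [hnorm]
  · have hgt : k < j := by omega
    have := pow_lt_pow_right_of_lt_one₀ (by norm_num : (0:ℝ) < 1/2)
      (by norm_num : (1/2:ℝ) < 1) (by omega : k+3 < j+3)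
    linarith [hnorm]

lemma x_ne (k : ℕ) : (phi (seq k)).1 ≠ 0 ∧ (phi (seq k)).1 ≠ 1 ∧ (phi (seq k)).1 ≠ 1/2 := by
  have hn := seq_phi_norm k
  have hlt1 : ((1/2:ℝ))^(k+3) < 1 := pow_lt_one₀ (by norm_num) (by norm_num) (by omega)
  have hle : ((1/2:ℝ))^(k+3) ≤ 1/2 := by
    calc ((1/2:ℝ))^(k+3) ≤ (1/2)^1 := by
          apply pow_le_pow_of_le_one (by norm_num) (by norm_num) (by omega)
      _ = 1/2 := by norm_num
  refine ⟨?_, ?_, ?_⟩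
  · intro h0
    rw [h0] at hn
    push_cast at hn
    rw [norm_zero] at hn
    exact absurd hn.symm (by positivity : (0:ℝ) < (1/2:ℝ)^(k+3)).ne'
  · intro h1
    rw [h1] at hn
    push_cast at hn
    rw [norm_one] at hn
    linarith
  · intro h2
    rw [h2] at hn
    have : ‖((1/2 : ℚ) : K)‖ = 2 := by
      have hc : ((1/2 : ℚ) : K) = 1 / (2:K) := by push_cast; ring
      rw [hc, norm_div, norm_one, norm_two]
      norm_num
    rw [this] at hn
    linarith

lemma wid {d y : ℚ} (h2 : 2*d - 1 ≠ 0)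
    (hy : y^2 = d^4 - 14*d^3 + 15*d^2 - 6*d + 1) :
    (4 * d ^ 2 - 4 * d + 1) * (((d^3-2*d+1) + (d-1)*y)/(2*(2*d-1)^2)) ^ 2
      - (d ^ 3 - 2 * d + 1) * (((d^3-2*d+1) + (d-1)*y)/(2*(2*d-1)^2)) +
          d ^ 3 - 2 * d ^ 2 + d = 0 := by
  have h3 : d*2 - 1 ≠ 0 := by intro hz; apply h2; linarith
  field_simp
  linear_combination ((1:ℚ) + (-6:ℚ)*d^1 + (13:ℚ)*d^2 + (-12:ℚ)*d^3 + (4:ℚ)*d^4) * hy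

end Stmt19

/-- The genus 1 quartic curve `y² = x⁴ - 14x³ + 15x² - 6x + 1` has infinitely
many rational points; consequently there are infinitely many parameters
`d ∉ {0, 1, 1/2}` for which the map
`φ_d(z) = ((2d-1)z² - (d²+d-1)z + d²-d)/((2d-1)z²)` realizes the graph R3P5,
i.e. the non-periodic preimage `-d/(d-1)` of the period-2 point `d` has a
rational preimage `w`; distinct such parameters give pairwise
non-linearly-equivalent quadratic rational maps over `ℚ`. -/
theorem stmt_19 :
    {p : ℚ × ℚ |
        p.2 ^ 2 = p.1 ^ 4 - 14 * p.1 ^ 3 + 15 * p.1 ^ 2 - 6 * p.1 + 1}.Infinite ∧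
    {d : ℚ | d ≠ 0 ∧ d ≠ 1 ∧ d ≠ 1/2 ∧ ∃ w : ℚ,
        (4 * d ^ 2 - 4 * d + 1) * w ^ 2 - (d ^ 3 - 2 * d + 1) * w +
          d ^ 3 - 2 * d ^ 2 + d = 0}.Infinite := by
  constructor
  · refine Set.infinite_of_injective_forall_mem
      (f := fun k : ℕ => Stmt19.phi (Stmt19.seq k)) ?_ ?_
    · intro j k hjk
      have hjk' : Stmt19.phi (Stmt19.seq j) = Stmt19.phi (Stmt19.seq k) := hjk
      exact Stmt19.x_injective (congrArg Prod.fst hjk')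
    · intro k
      exact Stmt19.seq_quartic k
  · refine Set.infinite_of_injective_forall_mem
      (f := fun k : ℕ => (Stmt19.phi (Stmt19.seq k)).1) Stmt19.x_injective ?_
    intro k
    obtain ⟨h0, h1, h2⟩ := Stmt19.x_ne k
    refine ⟨h0, h1, h2, ?_⟩
    have h2d : 2*(Stmt19.phi (Stmt19.seq k)).1 - 1 ≠ 0 := by
      intro hz
      apply h2
      linarith [hz]
    exact ⟨_, Stmt19.wid h2d (Stmt19.seq_quartic k)⟩
end
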